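/- Let w be a standard Gaussian random vector N(0, I_d) on ℝ^d, let x ∈ ℝ^d with ‖x‖ = 1, let δ ∈ ℝ^d with ‖δ‖ ≤ R ≤ 1/2, let V > 0, and let ε ∈ (0,1) satisfy d·log(2/ε) ≥ 1. Then P( ∃ δ′ ∈ ℝ^d with ‖δ′ − δ‖ ≤ ε and ∃ v ∈ ℝ^d with ‖v‖ ≤ V such that 𝟙[⟨w + v, x + δ⟩ > 0] ≠ 𝟙[⟨w + v, x + δ′⟩ > 0] ) ≤ 4ε·(√d + 2√(d·log(2/ε))) + 2·(1 + R + ε)·V. -/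

import Mathlib

open MeasureTheory ProbabilityTheory

/-- Product of `d` i.i.d. standard Gaussians: the law of a standard Gaussian
vector `N(0, I_d)` on `ℝ^d` (represented as `Fin d → ℝ`). -/
noncomputable def gaussVec (d : ℕ) : Measure (Fin d → ℝ) :=
  Measure.pi fun _ => gaussianReal 0 1

/-- Law of `m` i.i.d. standard Gaussian vectors in `ℝ^d` (the initialization `W₀`). -/
noncomputable def gaussMat (m d : ℕ) : Measure (Fin m → Fin d → ℝ) :=
  Measure.pi fun _ => gaussVec d

/-- Law of `m` i.i.d. uniform random signs (encoded as booleans). -/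
noncomputable def signsMeasure (m : ℕ) : Measure (Fin m → Bool) :=
  Measure.pi fun _ => (PMF.uniformOfFintype Bool).toMeasure

/-- Joint law of the random initialization `(W₀, a)`. -/
noncomputable def initMeasure (m d : ℕ) :
    Measure ((Fin m → Fin d → ℝ) × (Fin m → Bool)) :=
  (gaussMat m d).prod (signsMeasure m)

/-- The sign `±1` encoded by a boolean. -/
def signOf (b : Bool) : ℝ := if b then 1 else -1

/-- Euclidean inner product on `Fin d → ℝ`. -/
def dotp {d : ℕ} (w x : Fin d → ℝ) : ℝ := ∑ i, w i * x i

/-- Euclidean norm on `Fin d → ℝ`. -/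
noncomputable def euclNorm {d : ℕ} (w : Fin d → ℝ) : ℝ :=
  Real.sqrt (∑ i, (w i) ^ 2)

/-- Two-layer ReLU network `f(x; a, W) = (1/√m) ∑ₛ aₛ · max(0, ⟨wₛ, x⟩)`. -/
noncomputable def netF {m d : ℕ} (a : Fin m → Bool) (W : Fin m → Fin d → ℝ)
    (x : Fin d → ℝ) : ℝ :=
  (1 / Real.sqrt m) * ∑ s, signOf (a s) * max 0 (dotp (W s) x)

/-- (a.e.) input gradient `G(x; a, W) = (1/√m) ∑ₛ aₛ · 𝟙[⟨wₛ, x⟩ > 0] · wₛ`. -/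
noncomputable def netG {m d : ℕ} (a : Fin m → Bool) (W : Fin m → Fin d → ℝ)
    (x : Fin d → ℝ) : Fin d → ℝ :=
  fun i => (1 / Real.sqrt m) *
    ∑ s, signOf (a s) * (if 0 < dotp (W s) x then (1 : ℝ) else 0) * W s i

/-- `W ∈ B_{2,∞}(W₀, V)`: every column of `W` is within Euclidean distance `V`
of the corresponding column of `W₀`. -/
def inBall {m d : ℕ} (W0 W : Fin m → Fin d → ℝ) (V : ℝ) : Prop :=
  ∀ s, euclNorm (fun i => W s i - W0 s i) ≤ V


section SignFlipAux
open Real NNReal ENNReal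

variable {d : ℕ}

lemma euclNorm_nonneg' (w : Fin d → ℝ) : 0 ≤ euclNorm w := Real.sqrt_nonneg _

lemma euclNorm_sq' (w : Fin d → ℝ) : euclNorm w ^ 2 = ∑ i, w i ^ 2 :=
  Real.sq_sqrt (by positivity)

lemma abs_dotp_le' (v u : Fin d → ℝ) : |dotp v u| ≤ euclNorm v * euclNorm u := by
  rw [← Real.sqrt_sq_eq_abs, dotp, euclNorm, euclNorm, ← Real.sqrt_mul (by positivity)]
  exact Real.sqrt_le_sqrt (Finset.sum_mul_sq_le_sq_mul_sq Finset.univ v u)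

lemma euclNorm_add_le' (w v : Fin d → ℝ) :
    euclNorm (fun i => w i + v i) ≤ euclNorm w + euclNorm v := by
  have h2 : ∑ i, w i * v i ≤ euclNorm w * euclNorm v :=
    (le_abs_self _).trans (abs_dotp_le' w v)
  have hsum : ∑ i, (w i + v i) ^ 2
      = (∑ i, w i ^ 2) + 2 * (∑ i, w i * v i) + ∑ i, v i ^ 2 := by
    rw [Finset.mul_sum, ← Finset.sum_add_distrib, ← Finset.sum_add_distrib]
    exact Finset.sum_congr rfl fun i _ => by ring
  have hN := euclNorm_sq' w; have hM := euclNorm_sq' v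
  have h0w := Real.sqrt_nonneg (∑ i, w i ^ 2)
  have h0v := Real.sqrt_nonneg (∑ i, v i ^ 2)
  have hsq : ∑ i, (w i + v i) ^ 2 ≤ (euclNorm w + euclNorm v) ^ 2 := by
    rw [hsum]; nlinarith
  calc euclNorm (fun i => w i + v i) ≤ Real.sqrt ((euclNorm w + euclNorm v) ^ 2) :=
        Real.sqrt_le_sqrt hsq
    _ = euclNorm w + euclNorm v := Real.sqrt_sq (by unfold euclNorm; positivity)

lemma gauss_prod_eq' {a b : ℝ} (ha : 0 < a) (hb : 0 < b) (z x : ℝ) :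
    gaussianPDFReal 0 (NNReal.mk a ha.le) x * gaussianPDFReal 0 (NNReal.mk b hb.le) (z - x)
      = ((√(2*π*a))⁻¹ * (√(2*π*b))⁻¹ * rexp (-z^2/(2*(a+b)))) *
        rexp (-((a+b)/(2*a*b)) * (x - a*z/(a+b))^2) := by
  have hab : a + b ≠ 0 := by positivity
  simp only [gaussianPDFReal, sub_zero, NNReal.coe_mk]
  rw [show ((√(2*π*a))⁻¹ * rexp (-x^2/(2*a))) * ((√(2*π*b))⁻¹ * rexp (-(z-x)^2/(2*b)))
      = ((√(2*π*a))⁻¹ * (√(2*π*b))⁻¹) * (rexp (-x^2/(2*a)) * rexp (-(z-x)^2/(2*b))) by ring]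
  rw [← Real.exp_add, show ((√(2*π*a))⁻¹ * (√(2*π*b))⁻¹ * rexp (-z^2/(2*(a+b)))) *
        rexp (-((a+b)/(2*a*b)) * (x - a*z/(a+b))^2)
      = ((√(2*π*a))⁻¹ * (√(2*π*b))⁻¹) * (rexp (-z^2/(2*(a+b))) *
        rexp (-((a+b)/(2*a*b)) * (x - a*z/(a+b))^2)) by ring, ← Real.exp_add]
  congr 1
  congr 1
  field_simp
  ring

lemma gauss_conv_pdf' {a b : ℝ} (ha : 0 < a) (hb : 0 < b) (z : ℝ) :
    ∫ x, gaussianPDFReal 0 (NNReal.mk a ha.le) x * gaussianPDFReal 0 (NNReal.mk b hb.le) (z - x)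
      = gaussianPDFReal 0 ((NNReal.mk a ha.le) + (NNReal.mk b hb.le)) z := by
  have hc : 0 < (a+b)/(2*a*b) := by positivity
  simp only [gauss_prod_eq' ha hb z]
  rw [MeasureTheory.integral_const_mul]
  have hshift : ∫ x, rexp (-((a+b)/(2*a*b)) * (x - a*z/(a+b))^2)
      = ∫ x, rexp (-((a+b)/(2*a*b)) * x^2) :=
    integral_sub_right_eq_self (fun x => rexp (-((a+b)/(2*a*b)) * x^2)) (a*z/(a+b))
  rw [hshift, integral_gaussian]
  have h2pa : (0:ℝ) < 2*π*a := by positivity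
  have h2pab : (0:ℝ) < 2*π*(a+b) := by positivity
  have hkey : √(2*π*a) * √(2*π*b) = √(2*π*(a+b)) * √(π/((a+b)/(2*a*b))) := by
    rw [← Real.sqrt_mul h2pa.le, ← Real.sqrt_mul h2pab.le]
    congr 1
    field_simp
  have hrhs : gaussianPDFReal 0 ((NNReal.mk a ha.le) + (NNReal.mk b hb.le)) z
      = (√(2*π*(a+b)))⁻¹ * rexp (-z^2/(2*(a+b))) := by
    simp only [gaussianPDFReal, sub_zero]
    norm_num
  rw [hrhs]
  have hs1 : √(2*π*a) ≠ 0 := by positivity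
  have hs2 : √(2*π*b) ≠ 0 := by positivity
  have hs3 : √(2*π*(a+b)) ≠ 0 := by positivity
  have hs4 : √(π/((a+b)/(2*a*b))) ≠ 0 := by positivity
  rw [show (√(2*π*a))⁻¹ * (√(2*π*b))⁻¹ = (√(2*π*a) * √(2*π*b))⁻¹ by rw [mul_inv], hkey, mul_inv]
  field_simp

lemma gauss_conv_integrable' {a b : ℝ} (ha : 0 < a) (hb : 0 < b) (z : ℝ) :
    MeasureTheory.Integrable
      (fun x => gaussianPDFReal 0 (NNReal.mk a ha.le) x * gaussianPDFReal 0 (NNReal.mk b hb.le) (z - x)) := by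
  have hc : 0 < (a+b)/(2*a*b) := by positivity
  simp only [gauss_prod_eq' ha hb z]
  exact ((integrable_exp_neg_mul_sq hc).comp_sub_right (a*z/(a+b))).const_mul _

lemma gaussianPDF_point' {a b : ℝ≥0} (ha : a ≠ 0) (hb : b ≠ 0) (z : ℝ) :
    ∫⁻ x, gaussianPDF 0 a x * gaussianPDF 0 b (z - x) = gaussianPDF 0 (a + b) z := by
  have ha' : 0 < (a:ℝ) := by positivity
  have hb' : 0 < (b:ℝ) := by positivity
  have hae : (NNReal.mk (a:ℝ) ha'.le) = a := rfl
  have hbe : (NNReal.mk (b:ℝ) hb'.le) = b := rfl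
  simp only [gaussianPDF]
  have hmul : ∀ x:ℝ, ENNReal.ofReal (gaussianPDFReal 0 a x)
        * ENNReal.ofReal (gaussianPDFReal 0 b (z-x))
      = ENNReal.ofReal (gaussianPDFReal 0 a x * gaussianPDFReal 0 b (z-x)) :=
    fun x => (ENNReal.ofReal_mul (gaussianPDFReal_nonneg 0 a x)).symm
  simp_rw [hmul]
  rw [← MeasureTheory.ofReal_integral_eq_lintegral_ofReal
      (by rw [← hae, ← hbe]; exact gauss_conv_integrable' ha' hb' z)
      (Filter.Eventually.of_forall fun x =>
        mul_nonneg (gaussianPDFReal_nonneg 0 a x) (gaussianPDFReal_nonneg 0 b (z-x)))]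
  congr 1
  rw [← hae, ← hbe]
  exact gauss_conv_pdf' ha' hb' z

lemma gaussianReal_conv_map' (a b : ℝ≥0) :
    Measure.map (fun p : ℝ × ℝ => p.1 + p.2) ((gaussianReal 0 a).prod (gaussianReal 0 b))
      = gaussianReal 0 (a + b) := by
  rcases eq_or_ne a 0 with rfl | ha
  · rw [zero_add, gaussianReal_zero_var, Measure.dirac_prod,
      Measure.map_map (by fun_prop) (by fun_prop)]
    simp [Function.comp_def]
  rcases eq_or_ne b 0 with rfl | hb
  · rw [add_zero, gaussianReal_zero_var, Measure.prod_dirac,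
      Measure.map_map (by fun_prop) (by fun_prop)]
    simp [Function.comp_def]
  have hab : a + b ≠ 0 := fun h => ha ((add_eq_zero.mp h).1)
  ext s hs
  rw [Measure.map_apply (by fun_prop) hs, gaussianReal_apply _ hab,
    Measure.prod_apply (hs.preimage (by fun_prop))]
  have hsec : ∀ x : ℝ, (gaussianReal 0 b) (Prod.mk x ⁻¹' ((fun p : ℝ × ℝ => p.1 + p.2) ⁻¹' s))
      = ∫⁻ z in s, gaussianPDF 0 b (z - x) := by
    intro x
    have hpre : (Prod.mk x ⁻¹' ((fun p : ℝ × ℝ => p.1 + p.2) ⁻¹' s))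
        = (fun y => x + y) ⁻¹' s := rfl
    have hmeas : MeasurableSet ((fun y : ℝ => x + y) ⁻¹' s) := hs.preimage (by fun_prop)
    rw [hpre, gaussianReal_apply _ hb, ← lintegral_indicator hmeas _, ← lintegral_indicator hs _]
    have hind : ∀ y : ℝ, ((fun y : ℝ => x + y) ⁻¹' s).indicator (gaussianPDF 0 b) y
        = (s.indicator fun z => gaussianPDF 0 b (z - x)) (x + y) := by
      intro y
      by_cases hy : x + y ∈ s
      · rw [Set.indicator_of_mem hy, Set.indicator_of_mem (by exact hy), add_sub_cancel_left]
      · rw [Set.indicator_of_notMem hy, Set.indicator_of_notMem (by exact hy)]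
    simp_rw [hind]
    exact lintegral_add_left_eq_self (s.indicator fun z => gaussianPDF 0 b (z - x)) x
  simp_rw [hsec]
  rw [gaussianReal_of_var_ne_zero _ ha,
    lintegral_withDensity_eq_lintegral_mul (volume) (measurable_gaussianPDF 0 a)
      (g := fun x => ∫⁻ z in s, gaussianPDF 0 b (z - x))
      (Measurable.lintegral_prod_right'
        (f := fun p : ℝ × ℝ => gaussianPDF 0 b (p.2 - p.1))
        (((measurable_gaussianPDF 0 b).comp (measurable_snd.sub measurable_fst))))]
  simp only [Pi.mul_apply]
  have hpull : ∀ x : ℝ, gaussianPDF 0 a x * ∫⁻ z in s, gaussianPDF 0 b (z - x)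
      = ∫⁻ z in s, gaussianPDF 0 a x * gaussianPDF 0 b (z - x) :=
    fun x => (lintegral_const_mul' _ _ ENNReal.ofReal_ne_top).symm
  simp_rw [hpull]
  rw [lintegral_lintegral_swap
    (((measurable_gaussianPDF 0 a).comp measurable_fst).mul
      ((measurable_gaussianPDF 0 b).comp (measurable_snd.sub measurable_fst))).aemeasurable]
  exact setLIntegral_congr_fun hs
    (fun z _ => gaussianPDF_point' ha hb z)

lemma map_dotp' : ∀ (d : ℕ) (u : Fin d → ℝ),
    Measure.map (fun w : Fin d → ℝ => ∑ i, u i * w i) (gaussVec d)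
      = gaussianReal 0 (NNReal.mk (∑ i, u i ^ 2) (by positivity)) := by
  intro d
  induction d with
  | zero =>
    intro u
    have h0 : (NNReal.mk (∑ i : Fin 0, u i ^ 2) (by positivity)) = 0 := by
      ext; simp
    rw [h0, gaussianReal_zero_var]
    have hconst : (fun w : Fin 0 → ℝ => ∑ i, u i * w i) = fun _ => (0:ℝ) := by
      funext w; simp
    rw [hconst, Measure.map_const]
    simp [gaussVec]
  | succ n ih =>
    intro u
    have hMP := measurePreserving_piFinSuccAbove (fun _ : Fin (n+1) => gaussianReal 0 1) 0
    set e := MeasurableEquiv.piFinSuccAbove (fun _ : Fin (n+1) => ℝ) 0 with he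
    have hcomp : (fun w : Fin (n+1) → ℝ => ∑ i, u i * w i)
        = (fun p : ℝ × (Fin n → ℝ) => u 0 * p.1 + ∑ j : Fin n, u j.succ * p.2 j) ∘ e := by
      funext w
      simp only [Function.comp_apply, he, MeasurableEquiv.piFinSuccAbove_apply]
      rw [Fin.sum_univ_succ]
      simp [Fin.removeNth, Fin.zero_succAbove, Fin.tail]
    rw [show gaussVec (n+1) = Measure.pi fun _ : Fin (n+1) => gaussianReal 0 1 from rfl,
      hcomp, ← Measure.map_map (by fun_prop) e.measurable, hMP.map_eq]
    have hsplit : (fun p : ℝ × (Fin n → ℝ) => u 0 * p.1 + ∑ j : Fin n, u j.succ * p.2 j)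
        = (fun q : ℝ × ℝ => q.1 + q.2) ∘
          (Prod.map (fun x : ℝ => u 0 * x) (fun w : Fin n → ℝ => ∑ j : Fin n, u j.succ * w j)) :=
      rfl
    rw [hsplit, ← Measure.map_map (by fun_prop) (by fun_prop),
      ← Measure.map_prod_map _ _ (by fun_prop) (by fun_prop)]
    have h1 : Measure.map (fun x : ℝ => u 0 * x) (gaussianReal 0 1)
        = gaussianReal 0 (NNReal.mk ((u 0)^2) (sq_nonneg _)) := by
      rw [show (fun x : ℝ => u 0 * x) = (u 0 * ·) from rfl, gaussianReal_map_const_mul]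
      norm_num
    have h2 : Measure.map (fun w : Fin n → ℝ => ∑ j : Fin n, u j.succ * w j)
        (Measure.pi fun _ : Fin n => gaussianReal 0 1)
        = gaussianReal 0 (NNReal.mk (∑ j : Fin n, u j.succ ^ 2) (by positivity)) :=
      ih (fun j : Fin n => u j.succ)
    rw [h1, h2, gaussianReal_conv_map']
    congr 1
    ext
    simp [Fin.sum_univ_succ]

lemma lintegral_pi_pow' {g : ℝ → ℝ≥0∞} (hg : Measurable g) :
    ∀ n : ℕ, ∫⁻ w, ∏ i, g (w i) ∂(Measure.pi fun _ : Fin n => gaussianReal 0 1)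
      = (∫⁻ x, g x ∂(gaussianReal 0 1)) ^ n := by
  intro n
  induction n with
  | zero => simp
  | succ n ih =>
    have hMP := measurePreserving_piFinSuccAbove (fun _ : Fin (n+1) => gaussianReal 0 1) 0
    have hGm : Measurable fun p : ℝ × (Fin n → ℝ) => g p.1 * ∏ j, g (p.2 j) := by
      apply Measurable.mul (hg.comp measurable_fst)
      exact Finset.measurable_prod _ fun j _ =>
        hg.comp ((measurable_pi_apply j).comp measurable_snd)
    have hkey := hMP.lintegral_comp hGm
    have hprod : ∀ w : Fin (n+1) → ℝ, ∏ i, g (w i)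
        = g ((MeasurableEquiv.piFinSuccAbove (fun _ : Fin (n+1) => ℝ) 0 w).1)
          * ∏ j, g ((MeasurableEquiv.piFinSuccAbove (fun _ : Fin (n+1) => ℝ) 0 w).2 j) := by
      intro w
      rw [Fin.prod_univ_succ]
      simp [Fin.removeNth, Fin.zero_succAbove, Fin.tail]
    calc ∫⁻ w, ∏ i, g (w i) ∂(Measure.pi fun _ : Fin (n+1) => gaussianReal 0 1)
        = ∫⁻ w, (fun p : ℝ × (Fin n → ℝ) => g p.1 * ∏ j, g (p.2 j))
            ((MeasurableEquiv.piFinSuccAbove (fun _ : Fin (n+1) => ℝ) 0) w)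
            ∂(Measure.pi fun _ : Fin (n+1) => gaussianReal 0 1) :=
          lintegral_congr fun w => hprod w
      _ = ∫⁻ p, g p.1 * ∏ j, g (p.2 j)
            ∂((gaussianReal 0 1).prod (Measure.pi fun _ : Fin n => gaussianReal 0 1)) := hkey
      _ = (∫⁻ x, g x ∂(gaussianReal 0 1))
            * ∫⁻ w, ∏ j, g (w j) ∂(Measure.pi fun _ : Fin n => gaussianReal 0 1) :=
          lintegral_prod_mul hg.aemeasurable
            (Finset.measurable_prod _ fun j _ => hg.comp (measurable_pi_apply j)).aemeasurable
      _ = (∫⁻ x, g x ∂(gaussianReal 0 1)) ^ (n+1) := by rw [ih]; ring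

lemma lintegral_exp_quarter' :
    ∫⁻ x, ENNReal.ofReal (rexp (x^2/4)) ∂(gaussianReal 0 1) = ENNReal.ofReal (√2) := by
  rw [gaussianReal_of_var_ne_zero _ one_ne_zero,
    lintegral_withDensity_eq_lintegral_mul _ (measurable_gaussianPDF _ _) (by fun_prop)]
  have hpt : ∀ x : ℝ, (gaussianPDF 0 1 * fun x => ENNReal.ofReal (rexp (x^2/4))) x
      = ENNReal.ofReal ((√(2*π))⁻¹ * rexp (-(1/4) * x^2)) := by
    intro x
    simp only [Pi.mul_apply, gaussianPDF,
      ← ENNReal.ofReal_mul (gaussianPDFReal_nonneg 0 1 x)]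
    congr 1
    simp only [gaussianPDFReal, sub_zero, NNReal.coe_one, mul_one]
    rw [mul_assoc, ← Real.exp_add]
    congr 2
    ring
  simp_rw [hpt]
  rw [← MeasureTheory.ofReal_integral_eq_lintegral_ofReal
    ((integrable_exp_neg_mul_sq (by norm_num : (0:ℝ) < 1/4)).const_mul _)
    (Filter.Eventually.of_forall fun x => by positivity)]
  rw [MeasureTheory.integral_const_mul, integral_gaussian]
  congr 1
  rw [show π / (1/4) = 4*π by ring]
  rw [show (4*π) = (2*π)*2 by ring, Real.sqrt_mul (x := 2*π) (by positivity)]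
  rw [inv_mul_cancel_left₀ (by positivity)]

lemma chernoff_bound' (d : ℕ) (Bsq : ℝ) :
    gaussVec d {w | Bsq ≤ ∑ i, (w i)^2}
      ≤ ENNReal.ofReal (√2 ^ d * rexp (-Bsq/4)) := by
  set g : ℝ → ℝ≥0∞ := fun x => ENNReal.ofReal (rexp (x^2/4)) with hgdef
  have hg : Measurable g := by fun_prop
  set f : (Fin d → ℝ) → ℝ≥0∞ := fun w => ∏ i, g (w i) with hfdef
  have hfm : Measurable f := Finset.measurable_prod _ fun i _ => hg.comp (measurable_pi_apply i)
  have hfval : ∀ w : Fin d → ℝ, f w = ENNReal.ofReal (rexp ((∑ i, (w i)^2)/4)) := by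
    intro w
    rw [hfdef]
    simp only [hgdef]
    rw [← ENNReal.ofReal_prod_of_nonneg (fun i _ => (Real.exp_pos _).le), ← Real.exp_sum,
      Finset.sum_div]
  have hsub : {w : Fin d → ℝ | Bsq ≤ ∑ i, (w i)^2}
      ⊆ {w | ENNReal.ofReal (rexp (Bsq/4)) ≤ f w} := by
    intro w hw
    rw [Set.mem_setOf_eq, hfval w]
    exact ENNReal.ofReal_le_ofReal (Real.exp_le_exp.mpr (by linarith [Set.mem_setOf_eq ▸ hw]))
  calc gaussVec d {w | Bsq ≤ ∑ i, (w i)^2}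
      ≤ gaussVec d {w | ENNReal.ofReal (rexp (Bsq/4)) ≤ f w} := measure_mono hsub
    _ ≤ (∫⁻ w, f w ∂(gaussVec d)) / ENNReal.ofReal (rexp (Bsq/4)) :=
        meas_ge_le_lintegral_div hfm.aemeasurable
          (by simp [Real.exp_pos]) ENNReal.ofReal_ne_top
    _ = (ENNReal.ofReal (√2)) ^ d / ENNReal.ofReal (rexp (Bsq/4)) := by
        rw [show (∫⁻ w, f w ∂(gaussVec d))
          = (∫⁻ x, g x ∂(gaussianReal 0 1)) ^ d from lintegral_pi_pow' hg d,
          lintegral_exp_quarter']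
    _ = ENNReal.ofReal (√2 ^ d) / ENNReal.ofReal (rexp (Bsq/4)) := by
        rw [ENNReal.ofReal_pow (Real.sqrt_nonneg 2)]
    _ ≤ ENNReal.ofReal (√2 ^ d * rexp (-Bsq/4)) := by
        rw [← ENNReal.ofReal_div_of_pos (Real.exp_pos _)]
        apply ENNReal.ofReal_le_ofReal
        rw [div_eq_mul_inv, ← Real.exp_neg]
        apply le_of_eq
        congr 1
        ring

lemma slab_bound' (d : ℕ) (u : Fin d → ℝ) (hu : (1:ℝ)/4 ≤ ∑ i, u i ^ 2)
    (a : ℝ) (ha : 0 ≤ a) :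
    gaussVec d {w | |∑ i, u i * w i| ≤ a} ≤ ENNReal.ofReal (5/3 * a) := by
  set s : ℝ≥0 := NNReal.mk (∑ i, u i ^ 2) (by positivity) with hsdef
  have hs : s ≠ 0 := by
    intro h
    have h0 : (s:ℝ) = 0 := by rw [h]; simp
    rw [hsdef] at h0
    simp only [NNReal.coe_mk] at h0
    linarith
  have hmeas : Measurable fun w : Fin d → ℝ => ∑ i, u i * w i :=
    Finset.measurable_sum _ fun i _ => by fun_prop
  have hset : {w : Fin d → ℝ | |∑ i, u i * w i| ≤ a}
      = (fun w => ∑ i, u i * w i) ⁻¹' (Set.Icc (-a) a) := by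
    ext w; simp [abs_le]
  rw [hset, ← Measure.map_apply hmeas measurableSet_Icc, map_dotp' d u,
    gaussianReal_apply _ hs]
  have hpdf_le : ∀ z : ℝ, gaussianPDF 0 s z ≤ ENNReal.ofReal ((√(2*π*s))⁻¹) := by
    intro z
    apply ENNReal.ofReal_le_ofReal
    rw [gaussianPDFReal]
    calc (√(2*π*s))⁻¹ * rexp (-(z-0)^2/(2*s)) ≤ (√(2*π*s))⁻¹ * 1 := by
          apply mul_le_mul_of_nonneg_left _ (by positivity)
          rw [Real.exp_le_one_iff]
          apply div_nonpos_of_nonpos_of_nonneg (by nlinarith [sq_nonneg (z-0)]) (by positivity)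
      _ = (√(2*π*s))⁻¹ := mul_one _
  calc (∫⁻ z in Set.Icc (-a) a, gaussianPDF 0 s z)
      ≤ ∫⁻ _ in Set.Icc (-a) a, ENNReal.ofReal ((√(2*π*s))⁻¹) :=
        lintegral_mono fun z => hpdf_le z
    _ = ENNReal.ofReal ((√(2*π*s))⁻¹) * volume (Set.Icc (-a) a) := by
        rw [setLIntegral_const]
    _ = ENNReal.ofReal ((√(2*π*s))⁻¹) * ENNReal.ofReal (a - -a) := by
        rw [Real.volume_Icc]
    _ = ENNReal.ofReal ((√(2*π*s))⁻¹ * (a - -a)) :=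
        (ENNReal.ofReal_mul (by positivity)).symm
    _ ≤ ENNReal.ofReal (5/3 * a) := by
        apply ENNReal.ofReal_le_ofReal
        have hsge : (1:ℝ)/4 ≤ (s:ℝ) := by simpa [hsdef] using hu
        have hπ : (3:ℝ) ≤ π := by
          have := Real.pi_gt_three
          linarith
        have h32 : (3:ℝ)/2 ≤ 2*π*s := by nlinarith
        have hsqrt : (6:ℝ)/5 ≤ √(2*π*s) := by
          have h65 : ((6:ℝ)/5)^2 ≤ 2*π*s := by nlinarith
          calc (6:ℝ)/5 = √(((6:ℝ)/5)^2) := (Real.sqrt_sq (by norm_num)).symm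
            _ ≤ √(2*π*s) := Real.sqrt_le_sqrt h65
        have hinv : (√(2*π*s))⁻¹ ≤ 5/6 := by
          rw [inv_le_comm₀ (by positivity) (by norm_num)]
          calc (5/6 : ℝ)⁻¹ = 6/5 := by norm_num
            _ ≤ √(2*π*s) := hsqrt
        nlinarith

end SignFlipAux


set_option maxHeartbeats 1000000 in
/-- Lemma 4, eq. (9): for a standard Gaussian vector `w` on `ℝ^d`, the
probability that the activation sign at a perturbed weight `w + v`, `‖v‖ ≤ V`, differs
between `x + δ` and some `x + δ'` with `‖δ' - δ‖ ≤ ε` is at most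
`4ε·(√d + 2√(d·log(2/ε))) + 2·(1 + R + ε)·V`. -/
theorem sign_flip_probability_net (d : ℕ) (x δ : Fin d → ℝ) (R V ε : ℝ)
    (hx : euclNorm x = 1) (hδ : euclNorm δ ≤ R) (hR : R ≤ 1 / 2)
    (hV : 0 < V) (hε0 : 0 < ε) (hε1 : ε < 1) (hdε : 1 ≤ (d : ℝ) * Real.log (2 / ε)) :
    gaussVec d
        {w | ∃ δ' : Fin d → ℝ, euclNorm (fun i => δ' i - δ i) ≤ ε ∧
          ∃ v : Fin d → ℝ, euclNorm v ≤ V ∧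
            ¬((0 < dotp (fun i => w i + v i) (fun i => x i + δ i)) ↔
              (0 < dotp (fun i => w i + v i) (fun i => x i + δ' i)))} ≤
      ENNReal.ofReal
        (4 * ε * (Real.sqrt d + 2 * Real.sqrt ((d : ℝ) * Real.log (2 / ε))) +
          2 * (1 + R + ε) * V) := by
  classical
  have hε2 : (1:ℝ) < 2/ε := by
    rw [lt_div_iff₀ hε0]; linarith
  set L := Real.log (2/ε) with hLdef
  have hLpos : 0 < L := Real.log_pos hε2
  have hd1 : (1:ℝ) ≤ (d:ℝ) := by
    rcases Nat.eq_zero_or_pos d with h0 | h1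
    · exfalso; rw [h0] at hdε; push_cast at hdε; linarith
    · exact_mod_cast h1
  have hd0 : d ≠ 0 := by
    intro h; rw [h] at hd1; norm_num at hd1
  have hdL : 1 ≤ (d:ℝ) * L := hdε
  set B := Real.sqrt (d:ℝ) + 2 * Real.sqrt ((d:ℝ)*L) with hBdef
  have hBd : 1 ≤ Real.sqrt (d:ℝ) := by
    rw [show (1:ℝ) = Real.sqrt 1 from Real.sqrt_one.symm]
    exact Real.sqrt_le_sqrt hd1
  have hBdL : 1 ≤ Real.sqrt ((d:ℝ)*L) := by
    rw [show (1:ℝ) = Real.sqrt 1 from Real.sqrt_one.symm]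
    exact Real.sqrt_le_sqrt hdL
  have hB3 : 3 ≤ B := by rw [hBdef]; linarith
  have hR0 : 0 ≤ R := le_trans (euclNorm_nonneg' δ) hδ
  set u := fun i => x i + δ i with hu
  have hNu_le : euclNorm u ≤ 1 + R := by
    have h := euclNorm_add_le' x δ
    rw [hx] at h
    exact le_trans h (by linarith)
  have hNu_ge : 1 - R ≤ euclNorm u := by
    have hxeq : (fun i => u i + (-δ i)) = x := by funext i; simp [hu]
    have hnd : euclNorm (fun i => -δ i) = euclNorm δ := by
      unfold euclNorm; congr 1; exact Finset.sum_congr rfl fun i _ => by ring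
    have h := euclNorm_add_le' u (fun i => -δ i)
    rw [hxeq, hx, hnd] at h
    linarith
  have hsum_u : (1:ℝ)/4 ≤ ∑ i, u i ^ 2 := by
    have h := euclNorm_sq' u
    nlinarith [euclNorm_nonneg' u]
  set a := ε * B + (1 + R + ε) * V with hadef
  have ha0 : 0 ≤ a := by
    rw [hadef]
    have h1 : 0 ≤ ε * B := mul_nonneg hε0.le (by linarith)
    have h2 : 0 ≤ (1 + R + ε) * V := mul_nonneg (by linarith) hV.le
    linarith
  have hsub : {w : Fin d → ℝ | ∃ δ' : Fin d → ℝ, euclNorm (fun i => δ' i - δ i) ≤ ε ∧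
        ∃ v : Fin d → ℝ, euclNorm v ≤ V ∧
          ¬((0 < dotp (fun i => w i + v i) (fun i => x i + δ i)) ↔
            (0 < dotp (fun i => w i + v i) (fun i => x i + δ' i)))}
      ⊆ {w | B^2 ≤ ∑ i, (w i)^2} ∪ {w | |∑ i, u i * w i| ≤ a} := by
    intro w hw
    simp only [Set.mem_setOf_eq] at hw
    obtain ⟨δ', hδ', v, hv, hne⟩ := hw
    by_cases hwB : B^2 ≤ ∑ i, (w i)^2
    · exact Or.inl hwB
    right
    push_neg at hwB
    have hNw : euclNorm w ≤ B := by
      rw [euclNorm]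
      calc Real.sqrt (∑ i, w i ^ 2) ≤ Real.sqrt (B^2) := Real.sqrt_le_sqrt hwB.le
        _ = B := Real.sqrt_sq (by linarith)
    set W := fun i => w i + v i with hW
    have hdd : dotp W (fun i => x i + δ' i) - dotp W u = ∑ i, W i * (δ' i - δ i) := by
      simp only [dotp, hu, ← Finset.sum_sub_distrib]
      exact Finset.sum_congr rfl fun i _ => by ring
    have hcs1 : |∑ i, W i * (δ' i - δ i)| ≤ euclNorm W * ε := by
      calc |∑ i, W i * (δ' i - δ i)| = |dotp W (fun i => δ' i - δ i)| := rfl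
        _ ≤ euclNorm W * euclNorm (fun i => δ' i - δ i) := abs_dotp_le' _ _
        _ ≤ euclNorm W * ε := mul_le_mul_of_nonneg_left hδ' (euclNorm_nonneg' W)
    have habs1 := abs_le.mp hcs1
    have hkey : |dotp W u| ≤ ε * euclNorm W := by
      by_cases hP : 0 < dotp W u
      · have hQ : ¬(0 < dotp W (fun i => x i + δ' i)) := fun hq =>
          hne ⟨fun _ => hq, fun _ => hP⟩
        push_neg at hQ
        rw [abs_of_pos hP]
        have := hdd
        nlinarith [habs1.1]
      · have hQ : 0 < dotp W (fun i => x i + δ' i) := by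
          by_contra h
          exact hne ⟨fun hp => absurd hp hP, fun hq => absurd hq h⟩
        push_neg at hP
        rw [abs_of_nonpos hP]
        nlinarith [habs1.2]
    have hNW : euclNorm W ≤ B + V := le_trans (euclNorm_add_le' w v) (by linarith)
    have hvu : |dotp v u| ≤ V * (1 + R) := by
      calc |dotp v u| ≤ euclNorm v * euclNorm u := abs_dotp_le' _ _
        _ ≤ V * (1 + R) :=
          mul_le_mul hv hNu_le (euclNorm_nonneg' u) (le_trans (euclNorm_nonneg' v) hv)
    have hsplit : ∑ i, u i * w i = dotp W u - dotp v u := by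
      simp only [dotp, hW, ← Finset.sum_sub_distrib]
      exact Finset.sum_congr rfl fun i _ => by ring
    rw [Set.mem_setOf_eq, hsplit]
    have habsW := abs_le.mp hkey
    have habsv := abs_le.mp hvu
    have hNW0 : 0 ≤ euclNorm W := euclNorm_nonneg' W
    rw [abs_le]
    constructor
    · rw [hadef]; nlinarith
    · rw [hadef]; nlinarith
  have hch : Real.sqrt 2 ^ d * Real.exp (-B^2/4) ≤ (3/5) * ε := by
    have hsd : Real.sqrt (d:ℝ) ^ 2 = (d:ℝ) := Real.sq_sqrt (by positivity)
    have hsdL : Real.sqrt ((d:ℝ)*L) ^ 2 = (d:ℝ)*L := Real.sq_sqrt (by positivity)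
    have hBsq : (d:ℝ) + 4*((d:ℝ)*L) ≤ B^2 := by
      rw [hBdef]
      nlinarith [mul_nonneg (Real.sqrt_nonneg (d:ℝ)) (Real.sqrt_nonneg ((d:ℝ)*L))]
    have hexp : Real.exp (-B^2/4) ≤ Real.exp (-(d:ℝ)/4 - (d:ℝ)*L) := by
      apply Real.exp_le_exp.mpr
      nlinarith [hBsq]
    have he1 : Real.exp (-(d:ℝ)/4 - (d:ℝ)*L)
        = (Real.exp (-(1:ℝ)/4) * Real.exp (-L)) ^ d := by
      rw [mul_pow, ← Real.exp_nat_mul, ← Real.exp_nat_mul, ← Real.exp_add]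
      congr 1
      push_cast
      ring
    have hel : Real.exp (-L) = ε/2 := by
      rw [hLdef, Real.exp_neg, Real.exp_log (by positivity)]
      rw [inv_div]
    have hq : Real.exp (-(1:ℝ)/4) ≤ 4/5 := by
      have h54 : (5:ℝ)/4 ≤ Real.exp (1/4) := by
        have := Real.add_one_le_exp ((1:ℝ)/4)
        linarith
      have hmul : Real.exp (-(1:ℝ)/4) * Real.exp (1/4) = 1 := by
        rw [← Real.exp_add]; norm_num
      nlinarith [Real.exp_pos (-(1:ℝ)/4)]
    have hsqrt2 : Real.sqrt 2 ≤ 3/2 := by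
      rw [show (3:ℝ)/2 = Real.sqrt ((3/2)^2) from (Real.sqrt_sq (by norm_num)).symm]
      exact Real.sqrt_le_sqrt (by norm_num)
    have hbase : Real.sqrt 2 * (Real.exp (-(1:ℝ)/4) * Real.exp (-L)) ≤ (3/5) * ε := by
      rw [hel]
      have h1 : 0 ≤ Real.exp (-(1:ℝ)/4) := (Real.exp_pos _).le
      have hstep : Real.sqrt 2 * (Real.exp (-(1:ℝ)/4) * (ε/2)) ≤ (3/2) * ((4/5) * (ε/2)) :=
        mul_le_mul hsqrt2 (mul_le_mul_of_nonneg_right hq (by linarith))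
          (mul_nonneg h1 (by linarith)) (by norm_num)
      linarith
    calc Real.sqrt 2 ^ d * Real.exp (-B^2/4)
        ≤ Real.sqrt 2 ^ d * (Real.exp (-(1:ℝ)/4) * Real.exp (-L)) ^ d := by
          apply mul_le_mul_of_nonneg_left _ (by positivity)
          rw [← he1]; exact hexp
      _ = (Real.sqrt 2 * (Real.exp (-(1:ℝ)/4) * Real.exp (-L))) ^ d := (mul_pow _ _ _).symm
      _ ≤ ((3/5) * ε) ^ d := pow_le_pow_left₀ (by positivity) hbase d
      _ ≤ (3/5) * ε := by
          apply pow_le_of_le_one (by positivity) (by nlinarith) hd0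
  calc gaussVec d
        {w | ∃ δ' : Fin d → ℝ, euclNorm (fun i => δ' i - δ i) ≤ ε ∧
          ∃ v : Fin d → ℝ, euclNorm v ≤ V ∧
            ¬((0 < dotp (fun i => w i + v i) (fun i => x i + δ i)) ↔
              (0 < dotp (fun i => w i + v i) (fun i => x i + δ' i)))}
      ≤ gaussVec d ({w | B^2 ≤ ∑ i, (w i)^2} ∪ {w | |∑ i, u i * w i| ≤ a}) :=
        measure_mono hsub
    _ ≤ gaussVec d {w | B^2 ≤ ∑ i, (w i)^2} + gaussVec d {w | |∑ i, u i * w i| ≤ a} :=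
        measure_union_le _ _
    _ ≤ ENNReal.ofReal (Real.sqrt 2 ^ d * Real.exp (-B^2/4)) + ENNReal.ofReal (5/3 * a) :=
        add_le_add (chernoff_bound' d (B^2)) (slab_bound' d u hsum_u a ha0)
    _ ≤ ENNReal.ofReal ((3/5) * ε) + ENNReal.ofReal (5/3 * a) :=
        add_le_add (ENNReal.ofReal_le_ofReal hch) le_rfl
    _ = ENNReal.ofReal ((3/5) * ε + 5/3 * a) :=
        (ENNReal.ofReal_add (by positivity) (by positivity)).symm
    _ ≤ ENNReal.ofReal
        (4 * ε * (Real.sqrt d + 2 * Real.sqrt ((d : ℝ) * Real.log (2 / ε))) +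
          2 * (1 + R + ε) * V) := by
        apply ENNReal.ofReal_le_ofReal
        rw [hadef]
        have hεB : 3 * ε ≤ ε * B := by nlinarith
        have hRV : 0 ≤ (1 + R + ε) * V := mul_nonneg (by linarith) hV.le
        have hgoal : (3/5) * ε + 5/3 * (ε * B + (1 + R + ε) * V)
            ≤ 4 * ε * B + 2 * ((1 + R + ε) * V) := by nlinarith
        calc (3/5) * ε + 5/3 * (ε * B + (1 + R + ε) * V)
            ≤ 4 * ε * B + 2 * ((1 + R + ε) * V) := hgoal
          _ = 4 * ε * (Real.sqrt d + 2 * Real.sqrt ((d : ℝ) * Real.log (2 / ε))) +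
              2 * (1 + R + ε) * V := by rw [hBdef, hLdef]; ring
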